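/- arXiv:1902.08364 — 2 statements merged into one kernel-verified Lean document; each statement's English description precedes it below -/
import Mathlib

section
/- Let X and Y be independent real random variables. Assume X is regularly varying with index α>0 with tail balance constants p and q (p+q=1), and that E|Y|^{α+ε}<∞ for some ε>0. Then lim_{x→∞} P(XY>x)/P(|X|>x) = p·E[Y₊^α] + q·E[Y₋^α], where Y₊=max(Y,0), Y₋=max(−Y,0). -/
open MeasureTheory ProbabilityTheory Filter Set

private lemma breiman_ptwise {Ω : Type*} [MeasurableSpace Ω] (μ : Measure Ω) [IsProbabilityMeasure μ]
    (X : Ω → ℝ) (μX : Measure ℝ) [IsProbabilityMeasure μX]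
    (α : ℝ) (hα : 0 < α) (p q : ℝ)
    (t : ℝ → ℝ) (tpos : ∀ u, 0 < t u)
    (hrinv : ∀ c : ℝ, 0 < c → c⁻¹ ^ (-α) = c ^ α)
    (hIoi : ∀ u : ℝ, μX (Ioi u) = μ {ω | u < X ω})
    (hIic : ∀ u : ℝ, μX (Iic u) = μ {ω | X ω ≤ u})
    (plimit : ∀ b : ℝ, 0 < b →
      Tendsto (fun x => (μ {ω | x / b < X ω}).toReal / t x) atTop (nhds (p * b ^ α)))
    (qlimit : ∀ c : ℝ, 0 < c →
      Tendsto (fun x => (μ {ω | X ω ≤ -(c * x)}).toReal / t x) atTop (nhds (q * c ^ (-α)))) :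
    ∀ b : ℝ, Tendsto (fun x => (μX {a | x < a * b}).toReal / t x) atTop
      (nhds (p * max b 0 ^ α + q * max (-b) 0 ^ α)) := by
  intro b
  rcases lt_trichotomy b 0 with hb | hb | hb
  · -- negative case
    have hnb : 0 < -b := neg_pos.mpr hb
    set c₀ : ℝ := (-b)⁻¹ with hc₀
    have hc₀pos : 0 < c₀ := inv_pos.mpr hnb
    have hLQ : p * max b 0 ^ α + q * max (-b) 0 ^ α = q * c₀ ^ (-α) := by
      rw [max_eq_right hb.le, max_eq_left hnb.le, Real.zero_rpow hα.ne',
        hc₀, hrinv _ hnb]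
      ring
    rw [hLQ]
    rw [Metric.tendsto_nhds]
    intro ε hε
    have hcont : ContinuousAt (fun c : ℝ => q * c ^ (-α)) c₀ :=
      continuousAt_const.mul (Real.continuousAt_rpow_const c₀ (-α) (Or.inl hc₀pos.ne'))
    rw [Metric.continuousAt_iff] at hcont
    obtain ⟨δ, hδ, hδ'⟩ := hcont (ε/2) (by linarith)
    set c : ℝ := c₀ + δ/2 with hc
    have hcgt : c₀ < c := by rw [hc]; linarith
    have hcd : dist c c₀ < δ := by
      rw [Real.dist_eq, hc]
      rw [show c₀ + δ/2 - c₀ = δ/2 by ring, abs_of_nonneg (by linarith)]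
      linarith
    have hcball := hδ' hcd
    rw [Real.dist_eq] at hcball
    have hcpos : 0 < c := lt_trans hc₀pos hcgt
    have hU := qlimit c₀ hc₀pos
    have hL := qlimit c hcpos
    rw [Metric.tendsto_nhds] at hU hL
    filter_upwards [hU (ε/2) (by linarith), hL (ε/2) (by linarith),
      eventually_gt_atTop 0] with x hUx hLx hx
    rw [Real.dist_eq] at hUx hLx ⊢
    have hxb : x / b = -(c₀ * x) := by rw [hc₀]; field_simp
    have hset1 : {a : ℝ | x < a * b} ⊆ Iic (-(c₀ * x)) := by
      intro a ha
      simp only [mem_setOf_eq] at ha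
      have h1 : a < x / b := (lt_div_iff_of_neg hb).mpr ha
      rw [hxb] at h1
      exact le_of_lt h1
    have hset2 : Iic (-(c * x)) ⊆ {a : ℝ | x < a * b} := by
      intro a ha
      simp only [mem_Iic] at ha
      have h1 : a < x / b := by
        rw [hxb]
        have : -(c * x) < -(c₀ * x) := by
          have := mul_lt_mul_of_pos_right hcgt hx
          linarith
        linarith
      exact (lt_div_iff_of_neg hb).mp h1
    have hub : (μX {a | x < a * b}).toReal / t x
        ≤ (μ {ω | X ω ≤ -(c₀ * x)}).toReal / t x := by
      refine (div_le_div_iff_of_pos_right (tpos x)).mpr ?_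
      rw [← hIic]
      exact ENNReal.toReal_mono (measure_ne_top μX _) (measure_mono hset1)
    have hlb : (μ {ω | X ω ≤ -(c * x)}).toReal / t x
        ≤ (μX {a | x < a * b}).toReal / t x := by
      refine (div_le_div_iff_of_pos_right (tpos x)).mpr ?_
      rw [← hIic]
      exact ENNReal.toReal_mono (measure_ne_top μX _) (measure_mono hset2)
    rw [abs_lt] at hUx hLx hcball ⊢
    constructor
    · linarith
    · linarith
  · -- b = 0
    subst hb
    have hev : ∀ᶠ x : ℝ in atTop, (μX {a | x < a * 0}).toReal / t x = 0 := by
      filter_upwards [eventually_gt_atTop 0] with x hx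
      have hempty : {a : ℝ | x < a * 0} = ∅ := by
        ext a
        simp only [mem_setOf_eq, mul_zero, mem_empty_iff_false, iff_false]
        exact lt_asymm hx
      rw [hempty]
      simp
    rw [show p * max 0 0 ^ α + q * max (-0) 0 ^ α = 0 by
      simp [Real.zero_rpow hα.ne']]
    exact Tendsto.congr' (by filter_upwards [hev] with x hx using hx.symm) tendsto_const_nhds
  · -- b > 0
    have hset : ∀ x : ℝ, {a : ℝ | x < a * b} = Ioi (x / b) := by
      intro x; ext a
      simp only [mem_setOf_eq, mem_Ioi]
      exact ⟨fun h => (div_lt_iff₀ hb).mpr h, fun h => (div_lt_iff₀ hb).mp h⟩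
    have hval : p * max b 0 ^ α + q * max (-b) 0 ^ α = p * b ^ α := by
      rw [max_eq_left hb.le, max_eq_right (neg_nonpos.mpr hb.le), Real.zero_rpow hα.ne']
      ring
    rw [hval]
    refine (plimit b hb).congr (fun x => ?_)
    rw [hset x, hIoi]


private lemma breiman_potter (t : ℝ → ℝ) (α ε : ℝ) (hα : 0 < α) (hε : 0 < ε)
    (tpos : ∀ u, 0 < t u) (tanti : Antitone t) (tle1 : ∀ u, t u ≤ 1)
    (h2 : Tendsto (fun x : ℝ => t (2 * x) / t x) atTop (nhds ((2:ℝ) ^ (-α)))) :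
    ∃ C : ℝ, 0 ≤ C ∧ ∀ᶠ x : ℝ in atTop, ∀ m : ℝ, 1 ≤ m →
      t (x / m) ≤ C * m ^ (α + ε/2) * t x := by
  set β : ℝ := α + ε/2 with hβ
  have hβpos : 0 < β := by rw [hβ]; linarith
  set K : ℝ := (2:ℝ) ^ β with hKdef
  have hKpos : 0 < K := Real.rpow_pos_of_pos two_pos _
  have h2pow : ∀ k : ℕ, ((2:ℝ)^k : ℝ) = (2:ℝ) ^ (k:ℝ) := fun k => (Real.rpow_natCast 2 k).symm
  -- eventual doubling bound
  have hinv : Tendsto (fun x : ℝ => t x / t (2 * x)) atTop (nhds ((2:ℝ) ^ α)) := by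
    have hne : (2:ℝ) ^ (-α) ≠ 0 := (Real.rpow_pos_of_pos two_pos _).ne'
    have := h2.inv₀ hne
    have heq : ((2:ℝ) ^ (-α))⁻¹ = (2:ℝ) ^ α := by
      rw [Real.rpow_neg (by norm_num : (0:ℝ) ≤ 2), inv_inv]
    rw [heq] at this
    refine this.congr (fun x => ?_)
    rw [inv_div]
  have hKgt : (2:ℝ) ^ α < K := by
    rw [hKdef]
    exact (Real.rpow_lt_rpow_left_iff one_lt_two).mpr (by rw [hβ]; linarith)
  have hev : ∀ᶠ u : ℝ in atTop, t u ≤ K * t (2 * u) :=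
    (hinv.eventually_lt_const hKgt).mono fun u hu =>
      le_of_lt ((div_lt_iff₀ (tpos _)).mp hu)
  obtain ⟨x₀', hx₀'⟩ := eventually_atTop.mp hev
  set x₀ : ℝ := max x₀' 1 with hx₀def
  have hx₀1 : (1:ℝ) ≤ x₀ := le_max_right _ _
  have hx₀pos : 0 < x₀ := lt_of_lt_of_le one_pos hx₀1
  have H : ∀ u : ℝ, x₀ ≤ u → t u ≤ K * t (2 * u) := fun u hu =>
    hx₀' u (le_trans (le_max_left _ _) hu)
  -- chain inequality
  have hchain : ∀ k : ℕ, ∀ x : ℝ, x₀ * 2^k ≤ x → t (x / 2^k) ≤ K^k * t x := by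
    intro k
    induction k with
    | zero => intro x hx; simp
    | succ k ih =>
      intro x hx
      have h2k : (0:ℝ) < 2^k := by positivity
      have h2k1 : (0:ℝ) < 2^(k+1) := by positivity
      have hx' : x₀ * 2^k ≤ x := by
        refine le_trans ?_ hx
        have : (2:ℝ)^k ≤ 2^(k+1) := by
          rw [pow_succ]; nlinarith
        nlinarith
      have hu : x₀ ≤ x / 2^(k+1) := (le_div_iff₀ h2k1).mpr hx
      have h1 := H _ hu
      have h2' : 2 * (x / 2^(k+1)) = x / 2^k := by
        rw [pow_succ]; field_simp
      rw [h2'] at h1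
      calc t (x / 2^(k+1)) ≤ K * t (x / 2^k) := h1
        _ ≤ K * (K^k * t x) := mul_le_mul_of_nonneg_left (ih x hx') hKpos.le
        _ = K^(k+1) * t x := by ring
  -- K^k ≤ z^β when 2^k ≤ z
  have hKk : ∀ (k : ℕ) (z : ℝ), (2:ℝ) ^ (k:ℝ) ≤ z → K^k ≤ z ^ β := by
    intro k z hz
    have h2k : (0:ℝ) < 2 ^ (k:ℝ) := Real.rpow_pos_of_pos two_pos _
    have hKk' : K^k = ((2:ℝ) ^ (k:ℝ)) ^ β := by
      rw [← Real.rpow_natCast K k, hKdef, ← Real.rpow_mul (by norm_num : (0:ℝ) ≤ 2),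
        mul_comm, Real.rpow_mul (by norm_num : (0:ℝ) ≤ 2)]
    rw [hKk']
    exact Real.rpow_le_rpow h2k.le hz hβpos.le
  -- ceiling facts
  have hceil : ∀ m : ℝ, 1 ≤ m → m ≤ (2:ℝ) ^ ((⌈Real.logb 2 m⌉₊ : ℕ) : ℝ)
      ∧ (2:ℝ) ^ ((⌈Real.logb 2 m⌉₊ : ℕ) : ℝ) ≤ 2 * m := by
    intro m hm
    have hmpos : 0 < m := lt_of_lt_of_le one_pos hm
    have hlogb : 0 ≤ Real.logb 2 m := Real.logb_nonneg one_lt_two hm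
    have hm' : (2:ℝ) ^ Real.logb 2 m = m := Real.rpow_logb two_pos (by norm_num) hmpos
    constructor
    · nth_rewrite 1 [← hm']
      exact Real.rpow_le_rpow_of_exponent_le (by norm_num) (Nat.le_ceil _)
    · have h1 : ((⌈Real.logb 2 m⌉₊ : ℕ) : ℝ) ≤ Real.logb 2 m + 1 :=
        (Nat.ceil_lt_add_one hlogb).le
      calc (2:ℝ) ^ ((⌈Real.logb 2 m⌉₊ : ℕ) : ℝ) ≤ 2 ^ (Real.logb 2 m + 1) :=
            Real.rpow_le_rpow_of_exponent_le (by norm_num) h1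
        _ = 2 * m := by rw [Real.rpow_add two_pos, hm', Real.rpow_one]; ring
  -- floor facts
  have hfloor : ∀ z : ℝ, 1 ≤ z → (2:ℝ) ^ ((⌊Real.logb 2 z⌋₊ : ℕ) : ℝ) ≤ z
      ∧ z < 2 * (2:ℝ) ^ ((⌊Real.logb 2 z⌋₊ : ℕ) : ℝ) := by
    intro z hz
    have hzpos : 0 < z := lt_of_lt_of_le one_pos hz
    have hlogb : 0 ≤ Real.logb 2 z := Real.logb_nonneg one_lt_two hz
    have hz' : (2:ℝ) ^ Real.logb 2 z = z := Real.rpow_logb two_pos (by norm_num) hzpos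
    constructor
    · nth_rewrite 2 [← hz']
      exact Real.rpow_le_rpow_of_exponent_le (by norm_num) (Nat.floor_le hlogb)
    · have h1 : Real.logb 2 z < (⌊Real.logb 2 z⌋₊ : ℝ) + 1 := Nat.lt_floor_add_one _
      calc z = 2 ^ Real.logb 2 z := hz'.symm
        _ < 2 ^ ((⌊Real.logb 2 z⌋₊ : ℝ) + 1) :=
            Real.rpow_lt_rpow_of_exponent_lt one_lt_two h1
        _ = 2 * 2 ^ ((⌊Real.logb 2 z⌋₊ : ℕ) : ℝ) := by
            rw [Real.rpow_add two_pos, Real.rpow_one]; ring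
  have hCnn : (0:ℝ) ≤ (2:ℝ)^β * (1 + (t (2 * x₀))⁻¹) := by
    have h1 := inv_pos.mpr (tpos (2 * x₀))
    have h2 := Real.rpow_pos_of_pos two_pos β
    nlinarith
  refine ⟨(2:ℝ)^β * (1 + (t (2 * x₀))⁻¹), hCnn, ?_⟩
  filter_upwards [eventually_ge_atTop x₀] with x hx
  intro m hm
  have hmpos : 0 < m := lt_of_lt_of_le one_pos hm
  have hxpos : 0 < x := lt_of_lt_of_le hx₀pos hx
  have htx := tpos x
  have ht2x₀ := tpos (2 * x₀)
  have hmβ : (0:ℝ) < m ^ β := Real.rpow_pos_of_pos hmpos _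
  have key : t (x / m) ≤ (2:ℝ)^β * (t (2 * x₀))⁻¹ * m ^ β * t x ∨
      t (x / m) ≤ (2:ℝ)^β * m ^ β * t x := by
    set k : ℕ := ⌈Real.logb 2 m⌉₊ with hk
    obtain ⟨hck1, hck2⟩ := hceil m hm
    by_cases hcase : x₀ * 2^k ≤ x
    · right
      have hstep1 : t (x / m) ≤ t (x / 2^k) := by
        apply tanti
        have hck1' : m ≤ (2:ℝ)^k := by rw [h2pow k]; exact hck1
        exact div_le_div_of_nonneg_left hxpos.le hmpos hck1'
      have hstep2 := hchain k x hcase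
      have hstep3 : K ^ k ≤ (2 * m) ^ β := hKk k (2 * m) hck2
      have h2m : (2 * m) ^ β = 2^β * m ^ β := Real.mul_rpow (by norm_num) hmpos.le
      calc t (x / m) ≤ K^k * t x := le_trans hstep1 hstep2
        _ ≤ (2 * m) ^ β * t x := mul_le_mul_of_nonneg_right hstep3 htx.le
        _ = 2^β * m ^ β * t x := by rw [h2m]
    · left
      push_neg at hcase
      set z : ℝ := x / x₀ with hz
      have hz1 : 1 ≤ z := (le_div_iff₀ hx₀pos).mpr (by linarith)
      set j : ℕ := ⌊Real.logb 2 z⌋₊ with hj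
      obtain ⟨hfl1, hfl2⟩ := hfloor z hz1
      have h2jpos : (0:ℝ) < 2^j := by positivity
      have hxz : x = x₀ * z := by rw [hz]; field_simp
      have hchainj : t (x / 2^j) ≤ K^j * t x := by
        apply hchain
        rw [h2pow j]
        calc x₀ * 2 ^ ((j:ℕ):ℝ) ≤ x₀ * z := mul_le_mul_of_nonneg_left hfl1 hx₀pos.le
          _ = x := hxz.symm
      have hsmall : x / 2^j ≤ 2 * x₀ := by
        rw [div_le_iff₀ h2jpos, h2pow j]
        calc x = x₀ * z := hxz
          _ ≤ x₀ * (2 * 2 ^ ((j:ℕ):ℝ)) := mul_le_mul_of_nonneg_left hfl2.le hx₀pos.le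
          _ = 2 * x₀ * 2 ^ ((j:ℕ):ℝ) := by ring
      have hlow : t (2 * x₀) ≤ z ^ β * t x := by
        calc t (2 * x₀) ≤ t (x / 2^j) := tanti hsmall
          _ ≤ K^j * t x := hchainj
          _ ≤ z ^ β * t x :=
              mul_le_mul_of_nonneg_right (hKk j z hfl1) htx.le
      -- z < 2^k ≤ 2m so z^β ≤ (2m)^β
      have hzlt : z ≤ 2 * m := by
        have : x < x₀ * 2^k := hcase
        rw [h2pow k] at this
        have hzz : z < (2:ℝ) ^ ((k:ℕ):ℝ) := by
          rw [hz, div_lt_iff₀ hx₀pos]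
          linarith [this]
        linarith [hck2]
      have hzβ : z ^ β ≤ (2 * m) ^ β :=
        Real.rpow_le_rpow (by positivity) hzlt hβpos.le
      have h2m : (2 * m) ^ β = 2^β * m ^ β := Real.mul_rpow (by norm_num) hmpos.le
      have hone : (1:ℝ) ≤ (t (2 * x₀))⁻¹ * (z ^ β * t x) := by
        rw [inv_mul_eq_div, le_div_iff₀ ht2x₀, one_mul]
        exact hlow
      calc t (x / m) ≤ 1 := tle1 _
        _ ≤ (t (2 * x₀))⁻¹ * (z ^ β * t x) := hone
        _ ≤ (t (2 * x₀))⁻¹ * ((2 * m) ^ β * t x) := by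
            apply mul_le_mul_of_nonneg_left ?_ (by positivity)
            exact mul_le_mul_of_nonneg_right hzβ htx.le
        _ = 2^β * (t (2 * x₀))⁻¹ * m ^ β * t x := by rw [h2m]; ring
  rcases key with hk | hk
  · calc t (x / m) ≤ (2:ℝ)^β * (t (2 * x₀))⁻¹ * m ^ β * t x := hk
      _ ≤ (2:ℝ)^β * (1 + (t (2 * x₀))⁻¹) * m ^ β * t x := by
          apply mul_le_mul_of_nonneg_right ?_ htx.le
          apply mul_le_mul_of_nonneg_right ?_ hmβ.le
          nlinarith [Real.rpow_pos_of_pos two_pos β, inv_pos.mpr ht2x₀]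
  · calc t (x / m) ≤ (2:ℝ)^β * m ^ β * t x := hk
      _ ≤ (2:ℝ)^β * (1 + (t (2 * x₀))⁻¹) * m ^ β * t x := by
          apply mul_le_mul_of_nonneg_right ?_ htx.le
          apply mul_le_mul_of_nonneg_right ?_ hmβ.le
          nlinarith [Real.rpow_pos_of_pos two_pos β, inv_pos.mpr ht2x₀]


/-- Breiman-type lemma: if `X` is regularly varying with index `α > 0` and tail balance
constants `p, q`, and `Y` is independent with a finite moment of order `α + ε`, then
`P(XY > x)/P(|X| > x) → p E[Y₊^α] + q E[Y₋^α]`. -/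
theorem stmt0
    {Ω : Type*} [MeasurableSpace Ω] (μ : Measure Ω) [IsProbabilityMeasure μ]
    (X Y : Ω → ℝ) (hXm : Measurable X) (hYm : Measurable Y)
    (hindep : IndepFun X Y μ)
    (α : ℝ) (hα : 0 < α) (p q : ℝ) (hp : 0 ≤ p) (hq : 0 ≤ q) (hpq : p + q = 1)
    (hRV : ∀ c : ℝ, 0 < c →
      Tendsto (fun x : ℝ => (μ {ω | c * x < |X ω|}).toReal / (μ {ω | x < |X ω|}).toReal)
        atTop (nhds (c ^ (-α))))
    (hbalp : Tendsto (fun x : ℝ => (μ {ω | x < X ω}).toReal / (μ {ω | x < |X ω|}).toReal)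
        atTop (nhds p))
    (hbalq : Tendsto (fun x : ℝ => (μ {ω | X ω ≤ -x}).toReal / (μ {ω | x < |X ω|}).toReal)
        atTop (nhds q))
    (hmom : ∃ ε : ℝ, 0 < ε ∧ Integrable (fun ω => |Y ω| ^ (α + ε)) μ) :
    Tendsto (fun x : ℝ => (μ {ω | x < X ω * Y ω}).toReal / (μ {ω | x < |X ω|}).toReal)
      atTop
      (nhds (p * ∫ ω, max (Y ω) 0 ^ α ∂μ + q * ∫ ω, max (-Y ω) 0 ^ α ∂μ)) := by
  classical
  obtain ⟨ε, hε, hmomInt⟩ := hmom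
  set t : ℝ → ℝ := fun x => (μ {ω | x < |X ω|}).toReal with ht
  have ht' : ∀ u : ℝ, (μ {ω | u < |X ω|}).toReal = t u := fun _ => rfl
  have tanti : Antitone t := by
    intro a b hab
    exact ENNReal.toReal_mono (measure_ne_top μ _) (measure_mono (fun ω h => lt_of_le_of_lt hab h))
  have tnonneg : ∀ u, 0 ≤ t u := fun u => ENNReal.toReal_nonneg
  have tle1 : ∀ u, t u ≤ 1 := by
    intro u
    have := measure_mono (Set.subset_univ {ω | u < |X ω|}) (μ := μ)
    simpa [ht] using ENNReal.toReal_mono (measure_ne_top μ _) this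
  have tpos : ∀ u, 0 < t u := by
    by_contra hc
    push_neg at hc
    obtain ⟨x₀, hx₀⟩ := hc
    have hz : t x₀ = 0 := le_antisymm hx₀ (tnonneg x₀)
    have hev : ∀ᶠ x in atTop, t (2 * x) / t x = 0 := by
      filter_upwards [eventually_ge_atTop x₀] with x hx
      have : t x = 0 := le_antisymm (hz ▸ tanti hx) (tnonneg x)
      simp [this]
    have h2 := hRV 2 two_pos
    simp only [ht'] at h2
    have : (0:ℝ) = 2 ^ (-α) :=
      tendsto_nhds_unique (Tendsto.congr' (by filter_upwards [hev] with x hx using hx.symm)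
        tendsto_const_nhds) h2
    exact absurd this.symm (ne_of_gt (Real.rpow_pos_of_pos two_pos _))
  -- independence setup
  set μX := μ.map X with hμX
  set μY := μ.map Y with hμY
  haveI : IsProbabilityMeasure μX := Measure.isProbabilityMeasure_map hXm.aemeasurable
  haveI : IsProbabilityMeasure μY := Measure.isProbabilityMeasure_map hYm.aemeasurable
  have hmap : μ.map (fun ω => (Y ω, X ω)) = μY.prod μX :=
    (ProbabilityTheory.indepFun_iff_map_prod_eq_prod_map_map hYm.aemeasurable
      hXm.aemeasurable).mp hindep.symm
  have hsm : ∀ x : ℝ, MeasurableSet {pr : ℝ × ℝ | x < pr.2 * pr.1} := fun x =>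
    measurableSet_lt measurable_const (measurable_snd.mul measurable_fst)
  have hrep : ∀ x : ℝ, μ {ω | x < X ω * Y ω} = ∫⁻ b, μX {a | x < a * b} ∂μY := by
    intro x
    have h1 : μ {ω | x < X ω * Y ω}
        = μ.map (fun ω => (Y ω, X ω)) {pr : ℝ × ℝ | x < pr.2 * pr.1} := by
      rw [Measure.map_apply (hYm.prodMk hXm) (hsm x)]
      rfl
    rw [h1, hmap, Measure.prod_apply (hsm x)]
    rfl
  have hgm : ∀ x : ℝ, Measurable fun b => μX {a | x < a * b} := fun x =>
    measurable_measure_prodMk_left (hsm x)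
  have hIoi : ∀ u : ℝ, μX (Set.Ioi u) = μ {ω | u < X ω} := by
    intro u; rw [hμX, Measure.map_apply hXm measurableSet_Ioi]; rfl
  have hIic : ∀ u : ℝ, μX (Set.Iic u) = μ {ω | X ω ≤ u} := by
    intro u; rw [hμX, Measure.map_apply hXm measurableSet_Iic]; rfl
  have habs : ∀ u : ℝ, μX {a | u < |a|} = μ {ω | u < |X ω|} := by
    intro u
    have hs : MeasurableSet {a : ℝ | u < |a|} :=
      measurableSet_lt measurable_const (measurable_id.abs)
    rw [hμX, Measure.map_apply hXm hs]; rfl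
  -- the two product limits
  have hrinv : ∀ c : ℝ, 0 < c → c⁻¹ ^ (-α) = c ^ α := by
    intro c hc
    rw [Real.inv_rpow hc.le, Real.rpow_neg hc.le, inv_inv]
  have plimit : ∀ b : ℝ, 0 < b →
      Tendsto (fun x => (μ {ω | x / b < X ω}).toReal / t x) atTop (nhds (p * b ^ α)) := by
    intro b hb
    have h1 : Tendsto (fun x : ℝ => (μ {ω | x / b < X ω}).toReal / t (x / b)) atTop (nhds p) := by
      have := hbalp.comp (tendsto_id.atTop_div_const hb)
      simpa [Function.comp_def, ht'] using this
    have h2 : Tendsto (fun x : ℝ => t (b⁻¹ * x) / t x) atTop (nhds (b⁻¹ ^ (-α))) := by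
      have := hRV b⁻¹ (inv_pos.mpr hb)
      simpa [ht'] using this
    have h3 := h1.mul h2
    rw [hrinv b hb] at h3
    refine h3.congr (fun x => ?_)
    rw [inv_mul_eq_div]
    field_simp
    rw [mul_comm (t (x / b)) (t x), mul_div_mul_right _ _ (tpos (x / b)).ne']
  have qlimit : ∀ c : ℝ, 0 < c →
      Tendsto (fun x => (μ {ω | X ω ≤ -(c * x)}).toReal / t x) atTop (nhds (q * c ^ (-α))) := by
    intro c hc
    have h1 : Tendsto (fun x : ℝ => (μ {ω | X ω ≤ -(c * x)}).toReal / t (c * x))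
        atTop (nhds q) := by
      have := hbalq.comp (tendsto_id.const_mul_atTop hc)
      simpa [Function.comp_def, ht'] using this
    have h2 : Tendsto (fun x : ℝ => t (c * x) / t x) atTop (nhds (c ^ (-α))) := by
      have := hRV c hc
      simpa [ht'] using this
    have h3 := h1.mul h2
    refine h3.congr (fun x => ?_)
    field_simp
    rw [mul_comm (t (c * x)) (t x), mul_div_mul_right _ _ (tpos (c * x)).ne']
  -- pointwise convergence
  have hptw := breiman_ptwise μ X μX α hα p q t tpos hrinv hIoi hIic plimit qlimit
  -- Potter bound
  have h2RV : Tendsto (fun x : ℝ => t (2 * x) / t x) atTop (nhds ((2:ℝ) ^ (-α))) := by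
    have := hRV 2 two_pos
    simpa [ht'] using this
  obtain ⟨C₀, hC₀, hdom⟩ := breiman_potter t α ε hα hε tpos tanti tle1 h2RV
  -- integrability of the bound
  have hrpmeas : Measurable fun b : ℝ => |b| ^ (α + ε) :=
    by fun_prop
  have hInt : Integrable (fun b : ℝ => |b| ^ (α + ε)) μY := by
    rw [hμY]
    exact (integrable_map_measure hrpmeas.aestronglyMeasurable hYm.aemeasurable).mpr hmomInt
  have hboundint : Integrable (fun b : ℝ => C₀ * (1 + |b| ^ (α + ε))) μY :=
    (((integrable_const (1:ℝ)).add hInt).const_mul C₀)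
  -- the DCT
  have hFmeas : ∀ x : ℝ, AEStronglyMeasurable
      (fun b => (μX {a | x < a * b}).toReal / t x) μY := fun x =>
    (((hgm x).ennreal_toReal).div_const (t x)).aestronglyMeasurable
  have hbound : ∀ᶠ x : ℝ in atTop, ∀ᵐ b ∂μY,
      ‖(μX {a | x < a * b}).toReal / t x‖ ≤ C₀ * (1 + |b| ^ (α + ε)) := by
    filter_upwards [hdom, eventually_gt_atTop (0:ℝ)] with x hdx hx
    refine Filter.Eventually.of_forall (fun b => ?_)
    set m : ℝ := max |b| 1 with hm
    have hm1 : (1:ℝ) ≤ m := le_max_right _ _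
    have hmpos : (0:ℝ) < m := lt_of_lt_of_le one_pos hm1
    have hnn : 0 ≤ (μX {a | x < a * b}).toReal / t x :=
      div_nonneg ENNReal.toReal_nonneg (tpos x).le
    rw [Real.norm_eq_abs, abs_of_nonneg hnn]
    have hsub : {a : ℝ | x < a * b} ⊆ {a : ℝ | x / m < |a|} := by
      intro a ha
      simp only [Set.mem_setOf_eq] at ha ⊢
      have h1 : x < |a| * m := by
        have h2 : a * b ≤ |a| * m := by
          calc a * b ≤ |a * b| := le_abs_self _
            _ = |a| * |b| := abs_mul a b
            _ ≤ |a| * m := mul_le_mul_of_nonneg_left (le_max_left _ _) (abs_nonneg a)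
        linarith
      exact (div_lt_iff₀ hmpos).mpr h1
    have hnum : (μX {a | x < a * b}).toReal ≤ t (x / m) := by
      calc (μX {a | x < a * b}).toReal ≤ (μX {a | x / m < |a|}).toReal :=
            ENNReal.toReal_mono (measure_ne_top μX _) (measure_mono hsub)
        _ = t (x / m) := by rw [habs]
    have hmβ : m ^ (α + ε/2) ≤ 1 + |b| ^ (α + ε) := by
      rcases le_or_gt |b| 1 with hb1 | hb1
      · have : m = 1 := max_eq_right hb1
        rw [this, Real.one_rpow]
        have := Real.rpow_nonneg (abs_nonneg b) (α + ε)
        linarith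
      · have hmb : m = |b| := max_eq_left hb1.le
        rw [hmb]
        have h1 : |b| ^ (α + ε/2) ≤ |b| ^ (α + ε) :=
          Real.rpow_le_rpow_of_exponent_le hb1.le (by linarith)
        linarith
    rw [div_le_iff₀ (tpos x)]
    calc (μX {a | x < a * b}).toReal ≤ t (x / m) := hnum
      _ ≤ C₀ * m ^ (α + ε/2) * t x := hdx m hm1
      _ ≤ C₀ * (1 + |b| ^ (α + ε)) * t x := by
          apply mul_le_mul_of_nonneg_right ?_ (tpos x).le
          exact mul_le_mul_of_nonneg_left hmβ hC₀
  have hDCT := MeasureTheory.tendsto_integral_filter_of_dominated_convergence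
    (μ := μY) (l := atTop)
    (F := fun (x : ℝ) (b : ℝ) => (μX {a | x < a * b}).toReal / t x)
    (f := fun b => p * max b 0 ^ α + q * max (-b) 0 ^ α)
    (fun b => C₀ * (1 + |b| ^ (α + ε)))
    (Filter.Eventually.of_forall hFmeas) hbound hboundint
    (Filter.Eventually.of_forall hptw)
  -- identify the limit
  have hmax1 : Measurable fun b : ℝ => max b 0 ^ α := by fun_prop
  have hmax2 : Measurable fun b : ℝ => max (-b) 0 ^ α := by fun_prop
  have hfmeas : Measurable fun b : ℝ => p * max b 0 ^ α + q * max (-b) 0 ^ α :=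
    ((hmax1.const_mul p).add (hmax2.const_mul q))
  have hbnd : ∀ (w : ℝ), max w 0 ^ α ≤ 1 + |w| ^ (α + ε) := by
    intro w
    rcases le_or_gt |w| 1 with hw | hw
    · have h0 : max w 0 ≤ 1 := max_le (le_trans (le_abs_self w) hw) one_pos.le
      have := Real.rpow_le_one (le_max_right w 0) h0 hα.le
      have := Real.rpow_nonneg (abs_nonneg w) (α + ε)
      linarith
    · have h0 : max w 0 ≤ |w| := max_le (le_abs_self w) (abs_nonneg w)
      have h1 : max w 0 ^ α ≤ |w| ^ α :=
        Real.rpow_le_rpow (le_max_right w 0) h0 hα.le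
      have h2 : |w| ^ α ≤ |w| ^ (α + ε) :=
        Real.rpow_le_rpow_of_exponent_le hw.le (by linarith)
      have := Real.rpow_nonneg (abs_nonneg w) (α + ε)
      linarith
  have hint1 : Integrable (fun ω => max (Y ω) 0 ^ α) μ := by
    refine Integrable.mono ((integrable_const (1:ℝ)).add hmomInt)
      ((hmax1.comp hYm).aestronglyMeasurable) (Filter.Eventually.of_forall fun ω => ?_)
    simp only [Pi.add_apply]
    have h0 : (0:ℝ) ≤ max (Y ω) 0 ^ α := Real.rpow_nonneg (le_max_right _ _) _
    have h1 : (0:ℝ) ≤ 1 + |Y ω| ^ (α + ε) := by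
      have := Real.rpow_nonneg (abs_nonneg (Y ω)) (α + ε); linarith
    rw [Real.norm_eq_abs, Real.norm_eq_abs, abs_of_nonneg h0, abs_of_nonneg h1]
    exact hbnd (Y ω)
  have hint2 : Integrable (fun ω => max (-Y ω) 0 ^ α) μ := by
    refine Integrable.mono ((integrable_const (1:ℝ)).add hmomInt)
      ((hmax2.comp hYm).aestronglyMeasurable) (Filter.Eventually.of_forall fun ω => ?_)
    simp only [Pi.add_apply]
    have h0 : (0:ℝ) ≤ max (-Y ω) 0 ^ α := Real.rpow_nonneg (le_max_right _ _) _
    have h1 : (0:ℝ) ≤ 1 + |Y ω| ^ (α + ε) := by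
      have := Real.rpow_nonneg (abs_nonneg (Y ω)) (α + ε); linarith
    rw [Real.norm_eq_abs, Real.norm_eq_abs, abs_of_nonneg h0, abs_of_nonneg h1]
    have := hbnd (-Y ω)
    simpa [abs_neg] using this
  have hval : (∫ b, (p * max b 0 ^ α + q * max (-b) 0 ^ α) ∂μY)
      = p * ∫ ω, max (Y ω) 0 ^ α ∂μ + q * ∫ ω, max (-Y ω) 0 ^ α ∂μ := by
    rw [hμY, integral_map hYm.aemeasurable hfmeas.aestronglyMeasurable]
    rw [integral_add (hint1.const_mul p) (hint2.const_mul q),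
      integral_const_mul, integral_const_mul]
  rw [hval] at hDCT
  -- representation
  have heq : ∀ x : ℝ, (μ {ω | x < X ω * Y ω}).toReal / t x
      = ∫ b, (μX {a | x < a * b}).toReal / t x ∂μY := by
    intro x
    rw [hrep x,
      ← integral_toReal ((hgm x).aemeasurable) (Filter.Eventually.of_forall
        fun b => measure_lt_top μX _),
      integral_div]
  simp only [ht']
  exact hDCT.congr (fun x => (heq x).symm)
end

section
/- Let (M_{11,t})_{t} and (M_{12,t})_t be i.i.d. sequences of real random variables with E[|M_{11}|^{α₂}]=:q<1 and E[|M_{12}|^{α₂}]<∞ for some α₂>0, independent of a stationary sequence (Y_{2,t}) satisfying sup_{x>0} x^{α₂} P(|Y_{2,t}|>x) ≤ c < ∞. Then there exist constants C>0 such that for every s∈ℕ and all x>0, x^{α₂} P(|Σ_{i=s+1}^∞ (∏_{j=2−i}^{0}M_{11,j}) M_{12,1−i} Y_{2,−i}| > x) ≤ C q^s, where all products ∏_{j=2−i}^{0}M_{11,j} consist of i−1 i.i.d. factors independent of M_{12,1−i}Y_{2,−i}. -/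
open MeasureTheory ProbabilityTheory

/-- Tail bound for a product of independent random variables. -/
lemma tail_mul_aux {Ω : Type*} [MeasurableSpace Ω] (μ : Measure Ω) [IsProbabilityMeasure μ]
    {G Y : Ω → ℝ} (hGm : Measurable G) (hYm : Measurable Y)
    (hind : IndepFun G Y μ) {α c : ℝ} (hα : 0 < α) (hc : 0 ≤ c)
    (htail : ∀ x : ℝ, 0 < x → x ^ α * (μ {ω | x < |Y ω|}).toReal ≤ c)
    (hGint : Integrable (fun ω => |G ω| ^ α) μ)
    (x : ℝ) (hx : 0 < x) :
    μ {ω | x < |G ω * Y ω|} ≤ ENNReal.ofReal (c * (∫ ω, |G ω| ^ α ∂μ) / x ^ α) := by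
  have hmapeq := (indepFun_iff_map_prod_eq_prod_map_map hGm.aemeasurable hYm.aemeasurable).1 hind
  have hSmeas : MeasurableSet {p : ℝ × ℝ | x < |p.1 * p.2|} :=
    measurableSet_lt measurable_const ((measurable_fst.mul measurable_snd).abs)
  have h1 : μ {ω | x < |G ω * Y ω|}
      = (Measure.map (fun ω => (G ω, Y ω)) μ) {p : ℝ × ℝ | x < |p.1 * p.2|} := by
    rw [Measure.map_apply (hGm.prodMk hYm) hSmeas]; rfl
  rw [h1, hmapeq, Measure.prod_apply hSmeas]
  have key : ∀ g : ℝ, (μ.map Y) (Prod.mk g ⁻¹' {p : ℝ × ℝ | x < |p.1 * p.2|})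
      ≤ ENNReal.ofReal (c / x ^ α * |g| ^ α) := by
    intro g
    rcases eq_or_ne g 0 with rfl | hg
    · have hempty : (Prod.mk (0:ℝ) ⁻¹' {p : ℝ × ℝ | x < |p.1 * p.2|}) = ∅ := by
        ext y
        simp only [Set.mem_preimage, Set.mem_setOf_eq, zero_mul, abs_zero, Set.mem_empty_iff_false,
          iff_false, not_lt]
        exact hx.le
      rw [hempty]; simp
    · have hgpos : 0 < |g| := abs_pos.2 hg
      have hset : (Prod.mk g ⁻¹' {p : ℝ × ℝ | x < |p.1 * p.2|}) = {y : ℝ | x / |g| < |y|} := by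
        ext y
        simp only [Set.mem_preimage, Set.mem_setOf_eq, abs_mul]
        rw [div_lt_iff₀ hgpos, mul_comm]
      rw [hset, Measure.map_apply hYm (measurableSet_lt measurable_const measurable_abs)]
      set t := x / |g| with ht_def
      have ht : 0 < t := div_pos hx hgpos
      have htα : 0 < t ^ α := Real.rpow_pos_of_pos ht α
      have h2 : (μ {ω | t < |Y ω|}).toReal ≤ c / t ^ α := by
        rw [le_div_iff₀ htα]
        have := htail t ht
        linarith [this, mul_comm ((μ {ω | t < |Y ω|}).toReal) (t ^ α)]
      have h3 : c / t ^ α = c / x ^ α * |g| ^ α := by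
        rw [ht_def, Real.div_rpow hx.le (abs_nonneg g)]
        rw [div_div_eq_mul_div]
        ring
      refine (ENNReal.le_ofReal_iff_toReal_le (measure_ne_top μ _) ?_).2 ?_
      · positivity
      · rw [← h3]; exact h2
  calc ∫⁻ g, (μ.map Y) (Prod.mk g ⁻¹' {p : ℝ × ℝ | x < |p.1 * p.2|}) ∂(μ.map G)
      ≤ ∫⁻ g, ENNReal.ofReal (c / x ^ α * |g| ^ α) ∂(μ.map G) := lintegral_mono key
    _ = ENNReal.ofReal (c / x ^ α) * ∫⁻ g, ENNReal.ofReal (|g| ^ α) ∂(μ.map G) := by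
        simp_rw [ENNReal.ofReal_mul (by positivity : (0:ℝ) ≤ c / x ^ α)]
        rw [lintegral_const_mul' _ _ ENNReal.ofReal_ne_top]
    _ = ENNReal.ofReal (c / x ^ α) * ∫⁻ ω, ENNReal.ofReal (|G ω| ^ α) ∂μ := by
        rw [lintegral_map (by fun_prop) hGm]
    _ = ENNReal.ofReal (c / x ^ α) * ENNReal.ofReal (∫ ω, |G ω| ^ α ∂μ) := by
        rw [← ofReal_integral_eq_lintegral_ofReal hGint (ae_of_all _ fun ω => by positivity)]
    _ = ENNReal.ofReal (c * (∫ ω, |G ω| ^ α ∂μ) / x ^ α) := by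
        rw [← ENNReal.ofReal_mul (by positivity : (0:ℝ) ≤ c / x ^ α)]
        congr 1
        ring

/-- Independence of a finite product from a single factor with a fresh index. -/
lemma indep_prod_aux {Ω : Type*} [MeasurableSpace Ω] {μ : Measure Ω}
    {f : ℤ → Ω → ℝ} (hm : ∀ t, Measurable (f t))
    (hind : iIndepFun f μ) (N : ℕ) (i : ℤ)
    (hi : ∀ k : ℕ, k < N → -(k : ℤ) ≠ i) :
    IndepFun (fun ω => ∏ k ∈ Finset.range N, f (-(k : ℤ)) ω) (f i) μ := by
  have hnot : i ∉ (Finset.range N).image (fun k : ℕ => -(k : ℤ)) := by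
    simp only [Finset.mem_image, Finset.mem_range, not_exists, not_and]
    intro k hk hkeq
    exact hi k hk hkeq
  have h := hind.indepFun_finsetProd_of_notMem hm hnot
  have heq : (∏ j ∈ (Finset.range N).image (fun k : ℕ => -(k : ℤ)), f j)
      = fun ω => ∏ k ∈ Finset.range N, f (-(k : ℤ)) ω := by
    rw [Finset.prod_image (by intro a _ b _ h; simp only at h; omega)]
    funext ω
    exact Finset.prod_apply ω _ _
  rwa [heq] at h

set_option maxHeartbeats 1000000 in
/-- Geometric tail bound for the remainder series
`Ỹ^s = ∑_{i > s} (∏_{j=2-i}^{0} M₁₁,ⱼ) M₁₂,₁₋ᵢ Y₂,₋ᵢ`: if `((M₁₁,ₜ, M₁₂,ₜ))ₜ` is i.i.d.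
with `q := E|M₁₁|^{α₂} < 1` and `E|M₁₂|^{α₂} < ∞`, independent of the stationary sequence
`(Y₂,ₜ)` with `sup_{x>0} x^{α₂} P(|Y₂,ₜ| > x) ≤ c < ∞`, then there is `C > 0` such that
for every `s` and all `x > 0`, `x^{α₂} P(|Ỹ^s| > x) ≤ C q^s`. -/
theorem stmt14
    {Ω : Type*} [MeasurableSpace Ω] (μ : Measure Ω) [IsProbabilityMeasure μ]
    (M11 M12 Y2 : ℤ → Ω → ℝ)
    (hM11m : ∀ t, Measurable (M11 t)) (hM12m : ∀ t, Measurable (M12 t))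
    (hY2m : ∀ t, Measurable (Y2 t))
    (hiid : iIndepFun (fun t ω => (M11 t ω, M12 t ω)) μ)
    (hdist : ∀ t : ℤ, Measure.map (fun ω => (M11 t ω, M12 t ω)) μ
      = Measure.map (fun ω => (M11 0 ω, M12 0 ω)) μ)
    (hindepY : IndepFun (fun ω => fun t : ℤ => (M11 t ω, M12 t ω))
      (fun ω => fun t : ℤ => Y2 t ω) μ)
    (hstatY : Measure.map (fun ω => fun t : ℤ => Y2 (t + 1) ω) μ
      = Measure.map (fun ω => fun t : ℤ => Y2 t ω) μ)
    (α₂ c : ℝ) (hα₂ : 0 < α₂) (hc : 0 < c)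
    (htail : ∀ t : ℤ, ∀ x : ℝ, 0 < x → x ^ α₂ * (μ {ω | x < |Y2 t ω|}).toReal ≤ c)
    (hint1 : Integrable (fun ω => |M11 0 ω| ^ α₂) μ)
    (hint2 : Integrable (fun ω => |M12 0 ω| ^ α₂) μ)
    (q : ℝ) (hq : q = ∫ ω, |M11 0 ω| ^ α₂ ∂μ) (hq1 : q < 1) :
    ∃ C : ℝ, 0 < C ∧ ∀ s : ℕ, ∀ x : ℝ, 0 < x →
      x ^ α₂ * (μ {ω | x < |∑' n : ℕ,
          (∏ k ∈ Finset.range (s + n), M11 (-(k : ℤ)) ω)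
            * M12 (-(s + n : ℤ)) ω * Y2 (-(s + n : ℤ) - 1) ω|}).toReal
        ≤ C * q ^ s := by
  classical
  -- basic notation
  set m : ℝ := ∫ ω, |M12 0 ω| ^ α₂ ∂μ with hm_def
  have hq0 : 0 ≤ q := hq ▸ integral_nonneg (fun ω => by positivity)
  have hm0 : 0 ≤ m := integral_nonneg (fun ω => by positivity)
  set X : ℤ → Ω → ℝ × ℝ := fun t ω => (M11 t ω, M12 t ω) with hX_def
  have hXm : ∀ t, Measurable (X t) := fun t => (hM11m t).prodMk (hM12m t)
  have hφ1 : Measurable (fun p : ℝ × ℝ => |p.1| ^ α₂) := by fun_prop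
  have hφ2 : Measurable (fun p : ℝ × ℝ => |p.2| ^ α₂) := by fun_prop
  -- identical distribution consequences
  have hg_int : ∀ t : ℤ, Integrable (fun ω => |M11 t ω| ^ α₂) μ := by
    intro t
    have : Integrable ((fun p : ℝ × ℝ => |p.1| ^ α₂) ∘ X t) μ := by
      rw [← integrable_map_measure hφ1.aestronglyMeasurable (hXm t).aemeasurable, hdist t,
        integrable_map_measure hφ1.aestronglyMeasurable (hXm 0).aemeasurable]
      exact hint1
    exact this
  have hg_eq : ∀ t : ℤ, ∫ ω, |M11 t ω| ^ α₂ ∂μ = q := by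
    intro t
    have h1 : ∫ ω, |M11 t ω| ^ α₂ ∂μ
        = ∫ p, |p.1| ^ α₂ ∂(Measure.map (X t) μ) := by
      rw [integral_map (hXm t).aemeasurable hφ1.aestronglyMeasurable]
    rw [h1, hdist t, integral_map (hXm 0).aemeasurable hφ1.aestronglyMeasurable, hq]
  have hh_int : ∀ t : ℤ, Integrable (fun ω => |M12 t ω| ^ α₂) μ := by
    intro t
    have : Integrable ((fun p : ℝ × ℝ => |p.2| ^ α₂) ∘ X t) μ := by
      rw [← integrable_map_measure hφ2.aestronglyMeasurable (hXm t).aemeasurable, hdist t,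
        integrable_map_measure hφ2.aestronglyMeasurable (hXm 0).aemeasurable]
      exact hint2
    exact this
  have hh_eq : ∀ t : ℤ, ∫ ω, |M12 t ω| ^ α₂ ∂μ = m := by
    intro t
    have h1 : ∫ ω, |M12 t ω| ^ α₂ ∂μ
        = ∫ p, |p.2| ^ α₂ ∂(Measure.map (X t) μ) := by
      rw [integral_map (hXm t).aemeasurable hφ2.aestronglyMeasurable]
    rw [h1, hdist t, integral_map (hXm 0).aemeasurable hφ2.aestronglyMeasurable, hm_def]
  -- family of |M11|^α₂, iIndep
  set g : ℤ → Ω → ℝ := fun t => (fun p : ℝ × ℝ => |p.1| ^ α₂) ∘ X t with hg_def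
  have hg_meas : ∀ t, Measurable (g t) := fun t => hφ1.comp (hXm t)
  have hg_indep : iIndepFun g μ :=
    hiid.comp (fun _ => fun p : ℝ × ℝ => |p.1| ^ α₂) (fun _ => hφ1)
  -- product of |M11|'s : integrable and expectation q^N
  have prodP : ∀ N : ℕ,
      Integrable (fun ω => ∏ k ∈ Finset.range N, |M11 (-(k : ℤ)) ω| ^ α₂) μ ∧
      ∫ ω, ∏ k ∈ Finset.range N, |M11 (-(k : ℤ)) ω| ^ α₂ ∂μ = q ^ N := by
    intro N
    induction N with
    | zero => simp
    | succ N ih =>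
      have hindepN : IndepFun (fun ω => ∏ k ∈ Finset.range N, g (-(k : ℤ)) ω)
          (g (-(N : ℤ))) μ :=
        indep_prod_aux hg_meas hg_indep N (-(N : ℤ)) (fun k hk => by omega)
      have heq : (fun ω => ∏ k ∈ Finset.range (N + 1), |M11 (-(k : ℤ)) ω| ^ α₂)
          = (fun ω => ∏ k ∈ Finset.range N, |M11 (-(k : ℤ)) ω| ^ α₂)
            * (fun ω => |M11 (-(N : ℤ)) ω| ^ α₂) := by
        funext ω
        simp [Finset.prod_range_succ]
      have hgg : g (-(N : ℤ)) = fun ω => |M11 (-(N : ℤ)) ω| ^ α₂ := rfl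
      have hIndep' : IndepFun (fun ω => ∏ k ∈ Finset.range N, |M11 (-(k : ℤ)) ω| ^ α₂)
          (fun ω => |M11 (-(N : ℤ)) ω| ^ α₂) μ := hindepN
      constructor
      · rw [heq]
        exact hIndep'.integrable_mul ih.1 (hg_int _)
      · rw [heq, hIndep'.integral_mul_eq_mul_integral ih.1.aestronglyMeasurable (hg_int _).aestronglyMeasurable, ih.2, hg_eq, pow_succ]
  -- independence of ∏|M11|^α from |M12 (-N)|^α
  have prodM12 : ∀ N : ℕ,
      IndepFun (fun ω => ∏ k ∈ Finset.range N, |M11 (-(k : ℤ)) ω| ^ α₂)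
        (fun ω => |M12 (-(N : ℤ)) ω| ^ α₂) μ := by
    intro N
    set f2 : ℤ → Ω → ℝ := fun t =>
      (if t = -(N : ℤ) then (fun p : ℝ × ℝ => |p.2| ^ α₂) else (fun p : ℝ × ℝ => |p.1| ^ α₂))
        ∘ X t with hf2_def
    have hf2_meas : ∀ t, Measurable (f2 t) := by
      intro t
      apply Measurable.comp _ (hXm t)
      split
      · exact hφ2
      · exact hφ1
    have hf2_indep : iIndepFun f2 μ :=
      hiid.comp (fun t => if t = -(N : ℤ) then (fun p : ℝ × ℝ => |p.2| ^ α₂)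
          else (fun p : ℝ × ℝ => |p.1| ^ α₂))
        (fun t => by
          show Measurable (if t = -(N : ℤ) then (fun p : ℝ × ℝ => |p.2| ^ α₂)
            else (fun p : ℝ × ℝ => |p.1| ^ α₂))
          split
          · exact hφ2
          · exact hφ1)
    have h := indep_prod_aux hf2_meas hf2_indep N (-(N : ℤ)) (fun k hk => by omega)
    have h1 : (fun ω => ∏ k ∈ Finset.range N, f2 (-(k : ℤ)) ω)
        = (fun ω => ∏ k ∈ Finset.range N, |M11 (-(k : ℤ)) ω| ^ α₂) := by
      funext ω
      refine Finset.prod_congr rfl (fun k hk => ?_)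
      have hk' : -(k : ℤ) ≠ -(N : ℤ) := by
        simp only [Finset.mem_range] at hk; omega
      simp only [hf2_def, if_neg hk', Function.comp_apply]
      rfl
    have h2 : f2 (-(N : ℤ)) = fun ω => |M12 (-(N : ℤ)) ω| ^ α₂ := by
      simp only [hf2_def, if_pos rfl]
      rfl
    rwa [h1, h2] at h
  -- the full |G_N|^α₂
  have habs : ∀ (N : ℕ) (ω : Ω),
      |(∏ k ∈ Finset.range N, M11 (-(k : ℤ)) ω) * M12 (-(N : ℤ)) ω| ^ α₂
        = (∏ k ∈ Finset.range N, |M11 (-(k : ℤ)) ω| ^ α₂) * |M12 (-(N : ℤ)) ω| ^ α₂ := by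
    intro N ω
    rw [abs_mul, Real.mul_rpow (abs_nonneg _) (abs_nonneg _), Finset.abs_prod,
      Real.finset_prod_rpow _ _ (fun k _ => abs_nonneg _)]
  have hGint : ∀ N : ℕ,
      Integrable (fun ω =>
        |(∏ k ∈ Finset.range N, M11 (-(k : ℤ)) ω) * M12 (-(N : ℤ)) ω| ^ α₂) μ := by
    intro N
    have heq : (fun ω => |(∏ k ∈ Finset.range N, M11 (-(k : ℤ)) ω) * M12 (-(N : ℤ)) ω| ^ α₂)
        = (fun ω => ∏ k ∈ Finset.range N, |M11 (-(k : ℤ)) ω| ^ α₂)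
          * (fun ω => |M12 (-(N : ℤ)) ω| ^ α₂) := by
      funext ω; exact habs N ω
    rw [heq]
    exact (prodM12 N).integrable_mul (prodP N).1 (hh_int _)
  have hGeq : ∀ N : ℕ,
      ∫ ω, |(∏ k ∈ Finset.range N, M11 (-(k : ℤ)) ω) * M12 (-(N : ℤ)) ω| ^ α₂ ∂μ
        = q ^ N * m := by
    intro N
    have heq : (fun ω => |(∏ k ∈ Finset.range N, M11 (-(k : ℤ)) ω) * M12 (-(N : ℤ)) ω| ^ α₂)
        = (fun ω => ∏ k ∈ Finset.range N, |M11 (-(k : ℤ)) ω| ^ α₂)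
          * (fun ω => |M12 (-(N : ℤ)) ω| ^ α₂) := by
      funext ω; exact habs N ω
    calc ∫ ω, |(∏ k ∈ Finset.range N, M11 (-(k : ℤ)) ω) * M12 (-(N : ℤ)) ω| ^ α₂ ∂μ
        = ∫ ω, ((fun ω => ∏ k ∈ Finset.range N, |M11 (-(k : ℤ)) ω| ^ α₂)
            * (fun ω => |M12 (-(N : ℤ)) ω| ^ α₂)) ω ∂μ := by rw [heq]
      _ = q ^ N * m := by
          rw [(prodM12 N).integral_mul_eq_mul_integral (prodP N).1.aestronglyMeasurable (hh_int _).aestronglyMeasurable, (prodP N).2, hh_eq]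
  -- independence of G_N from Y_N
  have hGY : ∀ N : ℕ,
      IndepFun (fun ω => (∏ k ∈ Finset.range N, M11 (-(k : ℤ)) ω) * M12 (-(N : ℤ)) ω)
        (fun ω => Y2 (-(N : ℤ) - 1) ω) μ := by
    intro N
    have hΦG : Measurable (fun u : ℤ → ℝ × ℝ =>
        (∏ k ∈ Finset.range N, (u (-(k : ℤ))).1) * (u (-(N : ℤ))).2) := by
      exact (Finset.measurable_prod _ (fun k _ => (measurable_pi_apply _).fst)).mul
        ((measurable_pi_apply _).snd)
    have hΦY : Measurable (fun v : ℤ → ℝ => v (-(N : ℤ) - 1)) := measurable_pi_apply _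
    exact hindepY.comp hΦG hΦY
  -- main tail estimate for a single term, index N, threshold y
  have hterm : ∀ N : ℕ, ∀ y : ℝ, 0 < y →
      μ {ω | y < |(∏ k ∈ Finset.range N, M11 (-(k : ℤ)) ω) * M12 (-(N : ℤ)) ω
          * Y2 (-(N : ℤ) - 1) ω|}
        ≤ ENNReal.ofReal (c * (q ^ N * m) / y ^ α₂) := by
    intro N y hy
    have hGm : Measurable (fun ω => (∏ k ∈ Finset.range N, M11 (-(k : ℤ)) ω)
        * M12 (-(N : ℤ)) ω) :=
      (Finset.measurable_prod _ (fun k _ => hM11m _)).mul (hM12m _)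
    have h := tail_mul_aux μ hGm (hY2m (-(N : ℤ) - 1)) (hGY N) hα₂ hc.le
      (fun x hx => htail _ x hx) (hGint N) y hy
    rw [hGeq N] at h
    exact h
  -- geometric weights
  set δ : ℝ := (1 + q) / 2 with hδ_def
  have hδ0 : 0 < δ := by rw [hδ_def]; linarith
  have hδ1 : δ < 1 := by rw [hδ_def]; linarith
  set r : ℝ := δ ^ (1 / α₂) with hr_def
  have hr0 : 0 < r := Real.rpow_pos_of_pos hδ0 _
  have hr1 : r < 1 := Real.rpow_lt_one hδ0.le hδ1 (by positivity)
  have hrα : r ^ α₂ = δ := by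
    rw [hr_def, ← Real.rpow_mul hδ0.le, one_div_mul_cancel (ne_of_gt hα₂), Real.rpow_one]
  have hqδ : q / δ < 1 := by
    rw [div_lt_one hδ0, hδ_def]; linarith
  have hqδ0 : 0 ≤ q / δ := div_nonneg hq0 hδ0.le
  have h1r : 0 < 1 - r := by linarith
  have hrn : ∀ n : ℕ, ((r ^ n : ℝ)) ^ α₂ = δ ^ n := by
    intro n
    rw [← Real.rpow_natCast r n, ← Real.rpow_mul hr0.le, mul_comm,
      Real.rpow_mul hr0.le, Real.rpow_natCast, hrα]
  -- final constant
  set D : ℝ := c * m * ((1 - r) ^ α₂)⁻¹ * (1 - q / δ)⁻¹ with hD_def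
  have hD0 : 0 ≤ D := by
    have h1 : (0:ℝ) ≤ ((1 - r) ^ α₂)⁻¹ := by positivity
    have h2 : (0:ℝ) ≤ (1 - q / δ)⁻¹ := by
      have : 0 < 1 - q / δ := by linarith
      positivity
    positivity
  refine ⟨D + 1, by linarith, fun s x hx => ?_⟩
  -- abbreviation for terms
  set Z : ℕ → Ω → ℝ := fun n ω => (∏ k ∈ Finset.range (s + n), M11 (-(k : ℤ)) ω)
      * M12 (-(s + n : ℤ)) ω * Y2 (-(s + n : ℤ) - 1) ω with hZ_def
  -- index cast normalization
  have hcast : ∀ n : ℕ, (-(s + n : ℤ)) = -(((s + n : ℕ) : ℤ)) := by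
    intro n; push_cast; ring
  -- set inclusion
  have hsub : {ω | x < |∑' n : ℕ, Z n ω|}
      ⊆ ⋃ n : ℕ, {ω | (1 - r) * r ^ n * x < |Z n ω|} := by
    intro ω hω
    by_contra hcon
    simp only [Set.mem_iUnion, Set.mem_setOf_eq, not_exists, not_lt] at hcon
    have hwsum : Summable (fun n : ℕ => (1 - r) * r ^ n * x) := by
      exact (((summable_geometric_of_lt_one hr0.le hr1).mul_left (1 - r)).mul_right x)
    have habsZ : Summable (fun n => |Z n ω|) :=
      Summable.of_nonneg_of_le (fun n => abs_nonneg _) hcon hwsum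
    have hZsum : Summable (fun n => Z n ω) := habsZ.of_abs
    have h1 : |∑' n, Z n ω| ≤ ∑' n, |Z n ω| := by
      have := norm_tsum_le_tsum_norm (f := fun n => Z n ω)
        (by simpa [Real.norm_eq_abs] using habsZ)
      simpa [Real.norm_eq_abs] using this
    have h2 : ∑' n, |Z n ω| ≤ ∑' n, (1 - r) * r ^ n * x := Summable.tsum_le_tsum hcon habsZ hwsum
    have h3 : ∑' n : ℕ, (1 - r) * r ^ n * x = x := by
      rw [tsum_mul_right, tsum_mul_left, tsum_geometric_of_lt_one hr0.le hr1]
      field_simp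
    have hle : |∑' n, Z n ω| ≤ x := by rw [← h3]; exact h1.trans h2
    have : x < |∑' n, Z n ω| := hω
    linarith
  -- per-term bound with the rescaled threshold
  have hbound : ∀ n : ℕ, μ {ω | (1 - r) * r ^ n * x < |Z n ω|}
      ≤ ENNReal.ofReal ((c * q ^ s * m / ((1 - r) ^ α₂ * x ^ α₂)) * (q / δ) ^ n) := by
    intro n
    have hy : 0 < (1 - r) * r ^ n * x := by positivity
    have h := hterm (s + n) ((1 - r) * r ^ n * x) hy
    have hsetZ : {ω | (1 - r) * r ^ n * x < |Z n ω|}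
        = {ω | (1 - r) * r ^ n * x < |(∏ k ∈ Finset.range (s + n), M11 (-(k : ℤ)) ω)
            * M12 (-((s + n : ℕ) : ℤ)) ω * Y2 (-((s + n : ℕ) : ℤ) - 1) ω|} := by
      simp only [hZ_def, hcast n]
    rw [hsetZ]
    refine h.trans (le_of_eq ?_)
    congr 1
    -- algebra: c*(q^(s+n)*m)/((1-r)*r^n*x)^α₂ = (c*q^s*m/((1-r)^α₂*x^α₂))*(q/δ)^n
    have hden : ((1 - r) * r ^ n * x) ^ α₂ = (1 - r) ^ α₂ * δ ^ n * x ^ α₂ := by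
      rw [Real.mul_rpow (by positivity) hx.le, Real.mul_rpow h1r.le (by positivity), hrn n]
    rw [hden, pow_add]
    conv_rhs => rw [div_pow, div_mul_div_comm]
    congr 1 <;> ring
  -- sum the bounds
  set K : ℝ := c * q ^ s * m / ((1 - r) ^ α₂ * x ^ α₂) with hK_def
  have hK0 : 0 ≤ K := by
    have : (0:ℝ) < (1 - r) ^ α₂ * x ^ α₂ := by positivity
    rw [hK_def]
    positivity
  have hsummable : Summable (fun n : ℕ => K * (q / δ) ^ n) :=
    (summable_geometric_of_lt_one hqδ0 hqδ).mul_left K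
  have hmu : μ {ω | x < |∑' n : ℕ, Z n ω|}
      ≤ ENNReal.ofReal (K * (1 - q / δ)⁻¹) := by
    calc μ {ω | x < |∑' n : ℕ, Z n ω|}
        ≤ μ (⋃ n : ℕ, {ω | (1 - r) * r ^ n * x < |Z n ω|}) := measure_mono hsub
      _ ≤ ∑' n : ℕ, μ {ω | (1 - r) * r ^ n * x < |Z n ω|} := measure_iUnion_le _
      _ ≤ ∑' n : ℕ, ENNReal.ofReal (K * (q / δ) ^ n) := ENNReal.tsum_le_tsum (fun n => hbound n)
      _ = ENNReal.ofReal (∑' n : ℕ, K * (q / δ) ^ n) := by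
          rw [← ENNReal.ofReal_tsum_of_nonneg (fun n => by positivity) hsummable]
      _ = ENNReal.ofReal (K * (1 - q / δ)⁻¹) := by
          rw [tsum_mul_left, tsum_geometric_of_lt_one hqδ0 hqδ]
  have htoReal : (μ {ω | x < |∑' n : ℕ, Z n ω|}).toReal ≤ K * (1 - q / δ)⁻¹ := by
    refine ENNReal.toReal_le_of_le_ofReal ?_ hmu
    have : 0 < 1 - q / δ := by linarith
    positivity
  -- conclude
  have hgoal : x ^ α₂ * (μ {ω | x < |∑' n : ℕ, Z n ω|}).toReal ≤ (D + 1) * q ^ s := by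
    have h1 : x ^ α₂ * (μ {ω | x < |∑' n : ℕ, Z n ω|}).toReal
        ≤ x ^ α₂ * (K * (1 - q / δ)⁻¹) := by
      have hxα : (0:ℝ) ≤ x ^ α₂ := by positivity
      exact mul_le_mul_of_nonneg_left htoReal hxα
    have halg : ∀ A B E cc mm qq : ℝ, A ≠ 0 → B ≠ 0 →
        B * (cc * qq * mm / (A * B) * E) = cc * mm * A⁻¹ * E * qq := by
      intro A B E cc mm qq hA hB
      field_simp
    have h2 : x ^ α₂ * (K * (1 - q / δ)⁻¹) = D * q ^ s := by
      rw [hK_def, hD_def]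
      exact halg _ _ _ _ _ _ (ne_of_gt (Real.rpow_pos_of_pos h1r _))
        (ne_of_gt (Real.rpow_pos_of_pos hx _))
    have h3 : D * q ^ s ≤ (D + 1) * q ^ s := by
      have : (0:ℝ) ≤ q ^ s := by positivity
      nlinarith
    linarith
  exact hgoal
end
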